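/- Let H be a complex Hilbert space, let A be an invertible bounded linear operator on H (with bounded inverse A⁻¹), and let V, W be subspaces of H such that ⟨Av, Aw⟩ = 0 for all v ∈ V and w ∈ W. Then for all unit vectors v ∈ V and w ∈ W, |⟨v,w⟩| ≤ 1 − 1/(‖A‖²‖A⁻¹‖²). In particular the angle between V and W is uniformly bounded below by a constant depending only on ‖A‖‖A⁻¹‖. -/

import Mathlib

local notation "⟪" x ", " y "⟫" => @inner ℂ _ _ x y

/-- Geometric core of Theorem 4.6 (c) ⇒ (a): if an invertible operator `A` (with bounded
inverse `B`) maps the subspaces `V` and `W` to orthogonal subspaces, then for all unit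
vectors `v ∈ V`, `w ∈ W`, `|⟨v,w⟩| ≤ 1 − 1/(‖A‖²‖A⁻¹‖²)`; in particular the angle between
`V` and `W` is uniformly bounded below in terms of `‖A‖‖A⁻¹‖`. -/
theorem angle_bound_of_similarity_to_orthogonal
    {H : Type*} [NormedAddCommGroup H] [InnerProductSpace ℂ H] [CompleteSpace H]
    (A B : H →L[ℂ] H)
    (hAB : A.comp B = ContinuousLinearMap.id ℂ H)
    (hBA : B.comp A = ContinuousLinearMap.id ℂ H)
    (V W : Submodule ℂ H)
    (horth : ∀ v ∈ V, ∀ w ∈ W, ⟪A v, A w⟫ = 0) :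
    ∀ v ∈ V, ∀ w ∈ W, ‖v‖ = 1 → ‖w‖ = 1 →
      ‖⟪v, w⟫‖ ≤ 1 - 1 / (‖A‖ ^ 2 * ‖B‖ ^ 2) := by
  intro v hv w hw hnv hnw
  -- B (A x) = x
  have hBAx : ∀ x : H, B (A x) = x := by
    intro x
    have := congrArg (fun T : H →L[ℂ] H => T x) hBA
    simpa using this
  -- lower bound on ‖A x‖
  have hlow : ∀ x : H, ‖x‖ ≤ ‖B‖ * ‖A x‖ := by
    intro x
    calc ‖x‖ = ‖B (A x)‖ := by rw [hBAx]
    _ ≤ ‖B‖ * ‖A x‖ := B.le_opNorm _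
  have hApos : 0 < ‖A‖ := by
    by_contra h
    push_neg at h
    have hA0 : ‖A‖ = 0 := le_antisymm h (norm_nonneg _)
    have := hlow v
    have hAv : ‖A v‖ ≤ 0 := by
      calc ‖A v‖ ≤ ‖A‖ * ‖v‖ := A.le_opNorm v
      _ = 0 := by rw [hA0]; ring
    have : (1:ℝ) ≤ ‖B‖ * ‖A v‖ := by rwa [hnv] at this
    nlinarith [norm_nonneg (A v), norm_nonneg B]
  have hBpos : 0 < ‖B‖ := by
    rcases le_or_gt ‖B‖ 0 with h | h
    · exfalso
      have := hlow v
      rw [hnv] at this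
      nlinarith [norm_nonneg (A v), norm_nonneg B, le_antisymm h (norm_nonneg B)]
    · exact h
  -- choose unimodular λ
  set c : ℂ := ⟪v, w⟫ with hc
  by_cases hc0 : c = 0
  · rw [hc0]
    simp only [norm_zero]
    have h1 : (1:ℝ) ≤ ‖B‖ * ‖A‖ := by
      have := hlow v
      have h2 : ‖A v‖ ≤ ‖A‖ * ‖v‖ := A.le_opNorm v
      rw [hnv] at this h2
      nlinarith [norm_nonneg B]
    have : 1 / (‖A‖ ^ 2 * ‖B‖ ^ 2) ≤ 1 := by
      rw [div_le_one (by positivity)]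
      nlinarith
    linarith
  · set l : ℂ := c / ‖c‖ with hl
    have hlnorm : ‖l‖ = 1 := by
      rw [hl]
      rw [norm_div]
      simp [norm_norm, hc0]
    set v' : H := l • v with hv'
    have hv'V : v' ∈ V := V.smul_mem l hv
    have hnv' : ‖v'‖ = 1 := by rw [hv', norm_smul, hlnorm, hnv]; ring
    have hinner : ⟪v', w⟫ = (‖c‖ : ℂ) := by
      rw [hv', inner_smul_left]
      rw [hl]
      rw [map_div₀, Complex.conj_ofReal]
      rw [← hc]
      rw [div_mul_eq_mul_div, ← Complex.normSq_eq_conj_mul_self]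
      rw [Complex.normSq_eq_norm_sq]
      push_cast
      rw [sq, mul_div_assoc,
        div_self (Complex.ofReal_ne_zero.mpr (norm_ne_zero_iff.mpr hc0)), mul_one]
    -- norm of difference
    have hdiff : ‖v' - w‖ ^ 2 = 2 - 2 * ‖c‖ := by
      have := @norm_sub_sq ℂ H _ _ _ v' w
      rw [hinner] at this
      rw [this, hnv', hnw]
      simp [Complex.ofReal_re]
      ring
    -- orthogonality after A
    have horth' : ⟪A v', A w⟫ = 0 := horth v' hv'V w hw
    have hpyth : ‖A v' - A w‖ ^ 2 = ‖A v'‖ ^ 2 + ‖A w‖ ^ 2 := by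
      have := @norm_sub_sq ℂ H _ _ _ (A v') (A w)
      rw [horth'] at this
      simp at this
      linarith
    have hAv' : 1 ≤ ‖B‖ * ‖A v'‖ := by
      have := hlow v'; rwa [hnv'] at this
    have hAw : 1 ≤ ‖B‖ * ‖A w‖ := by
      have := hlow w; rwa [hnw] at this
    have hAd : ‖A v' - A w‖ ≤ ‖A‖ * ‖v' - w‖ := by
      have : A v' - A w = A (v' - w) := by simp
      rw [this]
      exact A.le_opNorm _
    -- combine
    have key : 2 / ‖B‖ ^ 2 ≤ ‖A‖ ^ 2 * (2 - 2 * ‖c‖) := by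
      have h1 : 2 / ‖B‖ ^ 2 ≤ ‖A v'‖ ^ 2 + ‖A w‖ ^ 2 := by
        have hv2 : 1 / ‖B‖ ^ 2 ≤ ‖A v'‖ ^ 2 := by
          rw [div_le_iff₀ (by positivity)]
          nlinarith [norm_nonneg (A v'), norm_nonneg B]
        have hw2 : 1 / ‖B‖ ^ 2 ≤ ‖A w‖ ^ 2 := by
          rw [div_le_iff₀ (by positivity)]
          nlinarith [norm_nonneg (A w), norm_nonneg B]
        have : 2 / ‖B‖ ^ 2 = 1 / ‖B‖ ^ 2 + 1 / ‖B‖ ^ 2 := by ring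
        linarith
      have h2 : ‖A v'‖ ^ 2 + ‖A w‖ ^ 2 ≤ ‖A‖ ^ 2 * ‖v' - w‖ ^ 2 := by
        rw [← hpyth]
        have := hAd
        nlinarith [norm_nonneg (A v' - A w), norm_nonneg (v' - w), norm_nonneg A]
      rw [← hdiff]
      linarith
    -- conclude
    have hcw : ‖c‖ ≤ 1 - 1 / (‖A‖ ^ 2 * ‖B‖ ^ 2) := by
      have hAB2 : 0 < ‖A‖ ^ 2 * ‖B‖ ^ 2 := by positivity
      rw [div_le_iff₀ (by positivity)] at key
      have : 1 / (‖A‖ ^ 2 * ‖B‖ ^ 2) ≤ 1 - ‖c‖ := by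
        rw [div_le_iff₀ hAB2]
        nlinarith
      linarith
    exact hcw
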